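/- The three elements u_0 = G, u_1 = F, u_2 = (F+G)^2·G of Z/2[r] are linearly independent over the subring Z/2[G], and each u_i equals (r^2 + r)·g_i(r^2) for some polynomial g_i of degree at most 3 (namely g_0 = t, g_1 = t + 1, g_2 = t^3 + t^2). -/
import Mathlib


open Polynomial

noncomputable def Fp : Polynomial (ZMod 2) := X * (X + 1) ^ 3

noncomputable def Gp : Polynomial (ZMod 2) := X ^ 3 * (X + 1)

lemma two_eq_zero : (2 : Polynomial (ZMod 2)) = 0 := by
  rw [← map_ofNat (C : ZMod 2 →+* Polynomial (ZMod 2)) 2, show (2:ZMod 2) = 0 from rfl, map_zero]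

lemma hG4 : Gp = X^4 + X^3 := by unfold Gp; ring

lemma hF4 : Fp = X^4 + X^3 + X^2 + X := by
  unfold Fp; linear_combination (X^3 + X^2 : Polynomial (ZMod 2)) * two_eq_zero

lemma hFG : Fp + Gp = X^2 + X := by
  rw [hF4, hG4]; linear_combination (X^4 + X^3 : Polynomial (ZMod 2)) * two_eq_zero

lemma cm1 (a b : Polynomial (ZMod 2)) :
    (a*b).coeff 1 = a.coeff 0 * b.coeff 1 + a.coeff 1 * b.coeff 0 := by
  rw [coeff_mul, Finset.Nat.sum_antidiagonal_eq_sum_range_succ_mk]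
  simp [Finset.sum_range_succ]

lemma cm2 (a b : Polynomial (ZMod 2)) :
    (a*b).coeff 2 = a.coeff 0 * b.coeff 2 + a.coeff 1 * b.coeff 1 + a.coeff 2 * b.coeff 0 := by
  rw [coeff_mul, Finset.Nat.sum_antidiagonal_eq_sum_range_succ_mk]
  simp [Finset.sum_range_succ]

lemma GC0 : Gp.coeff 0 = 0 := by rw [hG4]; simp
lemma GC1 : Gp.coeff 1 = 0 := by rw [hG4]; simp [coeff_X_pow]
lemma GC2 : Gp.coeff 2 = 0 := by rw [hG4]; simp [coeff_X_pow]
lemma GC3 : Gp.coeff 3 = 1 := by rw [hG4]; simp [coeff_X_pow]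
lemma FC0 : Fp.coeff 0 = 0 := by rw [hF4]; simp [coeff_X_pow]
lemma FC1 : Fp.coeff 1 = 1 := by rw [hF4]; simp [coeff_X_pow]
lemma FC2 : Fp.coeff 2 = 1 := by rw [hF4]; simp [coeff_X_pow, coeff_X]
lemma DC0 : (X^4 + X^2 : Polynomial (ZMod 2)).coeff 0 = 0 := by simp [coeff_X_pow]
lemma DC1 : (X^4 + X^2 : Polynomial (ZMod 2)).coeff 1 = 0 := by simp [coeff_X_pow]
lemma DC2 : (X^4 + X^2 : Polynomial (ZMod 2)).coeff 2 = 1 := by simp [coeff_X_pow]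

lemma hGne : Gp ≠ 0 := by
  intro h
  have h3 := GC3
  rw [h] at h3
  simp at h3

lemma mulG0 (a : Polynomial (ZMod 2)) : (a * Gp).coeff 0 = 0 := by
  rw [mul_coeff_zero, GC0, mul_zero]
lemma mulG1 (a : Polynomial (ZMod 2)) : (a * Gp).coeff 1 = 0 := by
  rw [cm1, GC0, GC1]; ring
lemma mulG2 (a : Polynomial (ZMod 2)) : (a * Gp).coeff 2 = 0 := by
  rw [cm2, GC0, GC1, GC2]; ring

lemma ccomp0 (p : Polynomial (ZMod 2)) : (p.comp Gp).coeff 0 = p.coeff 0 := by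
  rw [coeff_zero_eq_eval_zero, eval_comp, coeff_zero_eq_eval_zero]
  have : Gp.eval 0 = 0 := by rw [hG4]; simp
  rw [this]

lemma descent (p q s : Polynomial (ZMod 2))
    (h : p.comp Gp + q.comp Gp * Fp + s.comp Gp * (X^4+X^2) = 0) :
    p.coeff 0 = 0 ∧ q.coeff 0 = 0 ∧ s.coeff 0 = 0 ∧
    p.divX.comp Gp + q.divX.comp Gp * Fp + s.divX.comp Gp * (X^4+X^2) = 0 := by
  have hp0 : p.coeff 0 = 0 := by
    have h0 := congrArg (fun f => f.coeff 0) h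
    simp only [coeff_add, coeff_zero, mul_coeff_zero, FC0, DC0, mul_zero, add_zero, ccomp0] at h0
    simpa [coeff_X_pow] using h0
  have hp : p = p.divX * X := by
    conv_lhs => rw [← p.divX_mul_X_add]
    rw [hp0, map_zero, add_zero]
  have hpc : p.comp Gp = p.divX.comp Gp * Gp := by
    conv_lhs => rw [hp]
    rw [mul_comp, X_comp]
  have h1 : p.divX.comp Gp * Gp + q.comp Gp * Fp + s.comp Gp * (X^4+X^2) = 0 := by
    rw [← hpc]; exact h
  have hq0 : q.coeff 0 = 0 := by
    have h0 := congrArg (fun f => f.coeff 1) h1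
    simp only [coeff_add, coeff_zero, mulG1, cm1, FC0, FC1, DC0, DC1, GC0, GC1, ccomp0,
      mul_zero, mul_one, zero_add, add_zero, zero_mul] at h0
    simpa [coeff_X_pow] using h0
  have hq : q = q.divX * X := by
    conv_lhs => rw [← q.divX_mul_X_add]
    rw [hq0, map_zero, add_zero]
  have hqc : q.comp Gp = q.divX.comp Gp * Gp := by
    conv_lhs => rw [hq]
    rw [mul_comp, X_comp]
  have h2 : p.divX.comp Gp * Gp + (q.divX.comp Gp * Fp) * Gp + s.comp Gp * (X^4+X^2) = 0 := by
    rw [mul_right_comm, ← hqc]; exact h1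
  have hs0 : s.coeff 0 = 0 := by
    have h0 := congrArg (fun f => f.coeff 2) h2
    simp only [coeff_add, coeff_zero, mulG2, cm2, DC0, DC1, DC2, ccomp0,
      mul_zero, mul_one, zero_add, add_zero, zero_mul] at h0
    simpa [coeff_X_pow, GC0, GC1, GC2, FC0, FC1, FC2] using h0
  have hs : s = s.divX * X := by
    conv_lhs => rw [← s.divX_mul_X_add]
    rw [hs0, map_zero, add_zero]
  have hsc : s.comp Gp = s.divX.comp Gp * Gp := by
    conv_lhs => rw [hs]
    rw [mul_comp, X_comp]
  have h3 : (p.divX.comp Gp + q.divX.comp Gp * Fp + s.divX.comp Gp * (X^4+X^2)) * Gp = 0 := by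
    rw [hsc] at h2
    linear_combination h2
  rcases mul_eq_zero.mp h3 with h4 | h4
  · exact ⟨hp0, hq0, hs0, h4⟩
  · exact absurd h4 hGne

lemma key (n : ℕ) : ∀ p q s : Polynomial (ZMod 2),
    p.natDegree + q.natDegree + s.natDegree ≤ n →
    p.comp Gp + q.comp Gp * Fp + s.comp Gp * (X^4+X^2) = 0 →
    p = 0 ∧ q = 0 ∧ s = 0 := by
  induction n with
  | zero =>
    intro p q s hdeg h
    obtain ⟨hp0, hq0, hs0, -⟩ := descent p q s h
    refine ⟨?_, ?_, ?_⟩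
    · rw [eq_C_of_natDegree_le_zero (by omega : p.natDegree ≤ 0), hp0, map_zero]
    · rw [eq_C_of_natDegree_le_zero (by omega : q.natDegree ≤ 0), hq0, map_zero]
    · rw [eq_C_of_natDegree_le_zero (by omega : s.natDegree ≤ 0), hs0, map_zero]
  | succ n ih =>
    intro p q s hdeg h
    obtain ⟨hp0, hq0, hs0, h'⟩ := descent p q s h
    have k : ∀ r : Polynomial (ZMod 2), r.coeff 0 = 0 →
        r.divX.natDegree ≤ r.natDegree ∧ (r ≠ 0 → r.divX.natDegree < r.natDegree) := by
      intro r h0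
      refine ⟨natDegree_divX_le, fun hne => ?_⟩
      have hr : r = r.divX * X := by
        conv_lhs => rw [← r.divX_mul_X_add]
        rw [h0, map_zero, add_zero]
      have hdne : r.divX ≠ 0 := by
        intro hz
        rw [hz, zero_mul] at hr
        exact hne hr
      have : r.natDegree = r.divX.natDegree + 1 := by
        conv_lhs => rw [hr]
        rw [natDegree_mul_X hdne]
      omega
    by_cases hz : p = 0 ∧ q = 0 ∧ s = 0
    · exact hz
    · obtain ⟨l1, l1'⟩ := k p hp0
      obtain ⟨l2, l2'⟩ := k q hq0
      obtain ⟨l3, l3'⟩ := k s hs0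
      have hne : p ≠ 0 ∨ q ≠ 0 ∨ s ≠ 0 := by tauto
      have hle : p.divX.natDegree + q.divX.natDegree + s.divX.natDegree ≤ n := by
        rcases hne with h5 | h5 | h5
        · have := l1' h5; omega
        · have := l2' h5; omega
        · have := l3' h5; omega
      obtain ⟨e1, e2, e3⟩ := ih _ _ _ hle h'
      have hp : p = p.divX * X := by
        conv_lhs => rw [← p.divX_mul_X_add]
        rw [hp0, map_zero, add_zero]
      have hq : q = q.divX * X := by
        conv_lhs => rw [← q.divX_mul_X_add]
        rw [hq0, map_zero, add_zero]
      have hs : s = s.divX * X := by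
        conv_lhs => rw [← s.divX_mul_X_add]
        rw [hs0, map_zero, add_zero]
      rw [e1, zero_mul] at hp
      rw [e2, zero_mul] at hq
      rw [e3, zero_mul] at hs
      exact ⟨hp, hq, hs⟩

lemma key' (p q s : Polynomial (ZMod 2))
    (h : p.comp Gp + q.comp Gp * Fp + s.comp Gp * (X^4+X^2) = 0) :
    p = 0 ∧ q = 0 ∧ s = 0 :=
  key (p.natDegree + q.natDegree + s.natDegree) p q s le_rfl h

theorem stmt13 :
    LinearIndependent (Algebra.adjoin (ZMod 2) {Gp}) ![Gp, Fp, (Fp + Gp) ^ 2 * Gp] ∧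
    Gp = (X ^ 2 + X) * (X : Polynomial (ZMod 2)).comp (X ^ 2) ∧
    Fp = (X ^ 2 + X) * (X + 1 : Polynomial (ZMod 2)).comp (X ^ 2) ∧
    (Fp + Gp) ^ 2 * Gp = (X ^ 2 + X) * (X ^ 3 + X ^ 2 : Polynomial (ZMod 2)).comp (X ^ 2) ∧
    (∀ i : Fin 3, ∃ g : Polynomial (ZMod 2), g.degree ≤ 3 ∧
      ![Gp, Fp, (Fp + Gp) ^ 2 * Gp] i = (X ^ 2 + X) * g.comp (X ^ 2)) := by
  have hD : ((Fp + Gp)^2 : Polynomial (ZMod 2)) = X^4 + X^2 := by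
    rw [hFG]
    linear_combination (X^3 : Polynomial (ZMod 2)) * two_eq_zero
  have part2 : Gp = (X ^ 2 + X) * (X : Polynomial (ZMod 2)).comp (X ^ 2) := by
    rw [X_comp, hG4]; ring
  have part3 : Fp = (X ^ 2 + X) * (X + 1 : Polynomial (ZMod 2)).comp (X ^ 2) := by
    rw [add_comp, X_comp, one_comp, hF4]; ring
  have part4 : (Fp + Gp) ^ 2 * Gp = (X ^ 2 + X) * (X ^ 3 + X ^ 2 : Polynomial (ZMod 2)).comp (X ^ 2) := by
    rw [hD, hG4, add_comp, pow_comp, pow_comp, X_comp]; ring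
  refine ⟨?_, part2, part3, part4, ?_⟩
  · rw [Fintype.linearIndependent_iff]
    intro g hg
    have hmem : ∀ i : Fin 3, ∃ f, (Polynomial.aeval (R := ZMod 2) (A := Polynomial (ZMod 2)) Gp) f = (g i : Polynomial (ZMod 2)) := by
      intro i
      have h2 := (g i).2
      have h3 : (g i : Polynomial (ZMod 2)) ∈ (Polynomial.aeval (R := ZMod 2) (A := Polynomial (ZMod 2)) Gp).range := by
        rw [← Algebra.adjoin_singleton_eq_range_aeval]
        exact h2
      exact h3
    obtain ⟨f0, hf0⟩ := hmem 0
    obtain ⟨f1, hf1⟩ := hmem 1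
    obtain ⟨f2, hf2⟩ := hmem 2
    have hsmul : ∀ (a : (Algebra.adjoin (ZMod 2) {Gp})) (x : Polynomial (ZMod 2)),
        a • x = (a : Polynomial (ZMod 2)) * x := fun a x => rfl
    have hae : ∀ f : Polynomial (ZMod 2), aeval Gp f = f.comp Gp := by
      intro f; simp [aeval_def, comp]
    rw [Fin.sum_univ_three] at hg
    simp only [Matrix.cons_val_zero, Matrix.cons_val_one, Matrix.head_cons,
      Matrix.cons_val_two, Matrix.tail_cons, hsmul] at hg
    rw [← hf0, ← hf1, ← hf2, hae, hae, hae] at hg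
    have heq : (X*f0).comp Gp + f1.comp Gp * Fp + (X*f2).comp Gp * (X^4+X^2) = 0 := by
      rw [mul_comp, X_comp, mul_comp, X_comp, ← hD]
      linear_combination hg
    obtain ⟨e0, e1, e2⟩ := key' (X*f0) f1 (X*f2) heq
    have hf0' : f0 = 0 := by
      rcases mul_eq_zero.mp e0 with h | h
      · exact absurd h X_ne_zero
      · exact h
    have hf2' : f2 = 0 := by
      rcases mul_eq_zero.mp e2 with h | h
      · exact absurd h X_ne_zero
      · exact h
    have z0 : g 0 = 0 := Subtype.ext (by rw [← hf0, hf0', map_zero]; simp)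
    have z1 : g 1 = 0 := Subtype.ext (by rw [← hf1, e1, map_zero]; simp)
    have z2 : g 2 = 0 := Subtype.ext (by rw [← hf2, hf2', map_zero]; simp)
    intro i
    fin_cases i
    · exact z0
    · exact z1
    · exact z2
  · intro i
    fin_cases i
    · exact ⟨X, by compute_degree!, part2⟩
    · exact ⟨X + 1, by compute_degree!, part3⟩
    · exact ⟨X^3 + X^2, by compute_degree!, part4⟩
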